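/- For every ξ ∈ ℝ^N and all complex numbers u, v, setting E₀ = (1/2)|v|² + (1/8) log²(1 + |ξ|²)|u|² + (π²/8)|u|² and E = E₀ + ρ(ξ) Re(v · conj(u)) + ρ(ξ) log(1 + |ξ|²) |u|²/2, one has (1/2) E₀ ≤ E ≤ (9/4) E₀. -/

import Mathlib

open MeasureTheory

/-- The weight function ρ from the paper. -/
noncomputable def rho {N : ℕ} (ξ : EuclideanSpace ℝ (Fin N)) : ℝ :=
  if ‖ξ‖ ≤ Real.sqrt (Real.exp (Real.pi / Real.sqrt 3) - 1) then
    (1 / 4) * Real.log (1 + ‖ξ‖ ^ 2)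
  else
    (1 / 16) * ((Real.log (1 + ‖ξ‖ ^ 2)) ^ 2 + Real.pi ^ 2) / Real.log (1 + ‖ξ‖ ^ 2)

lemma rho_bounds {N : ℕ} (ξ : EuclideanSpace ℝ (Fin N)) :
    0 ≤ rho ξ ∧ 4 * rho ξ ≤ Real.sqrt (Real.log (1 + ‖ξ‖ ^ 2) ^ 2 + Real.pi ^ 2) := by
  set L := Real.log (1 + ‖ξ‖ ^ 2) with hLdef
  have hL0 : 0 ≤ L := Real.log_nonneg (by nlinarith [sq_nonneg ‖ξ‖])
  have hs0 : 0 ≤ L ^ 2 + Real.pi ^ 2 := by positivity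
  have hs := Real.sq_sqrt hs0
  have hsn := Real.sqrt_nonneg (L ^ 2 + Real.pi ^ 2)
  unfold rho
  split_ifs with h
  · refine ⟨by positivity, ?_⟩
    have : L ≤ Real.sqrt (L ^ 2 + Real.pi ^ 2) := by
      nlinarith [sq_nonneg Real.pi, sq_nonneg (L - Real.sqrt (L ^ 2 + Real.pi ^ 2))]
    linarith
  · push_neg at h
    have hE1 : (1 : ℝ) < Real.exp (Real.pi / Real.sqrt 3) := by
      have h0 : (0:ℝ) < Real.pi / Real.sqrt 3 := by positivity
      have := Real.exp_lt_exp.mpr h0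
      simpa using this
    have hx2 : Real.exp (Real.pi / Real.sqrt 3) - 1 < ‖ξ‖ ^ 2 := by
      have h0 : 0 ≤ Real.exp (Real.pi / Real.sqrt 3) - 1 := by linarith
      nlinarith [Real.sq_sqrt h0, Real.sqrt_nonneg (Real.exp (Real.pi / Real.sqrt 3) - 1),
        norm_nonneg ξ]
    have hLgt : Real.pi / Real.sqrt 3 < L := by
      have := Real.log_lt_log (Real.exp_pos _) (show Real.exp (Real.pi / Real.sqrt 3) < 1 + ‖ξ‖ ^ 2 by linarith)
      simpa [Real.log_exp] using this
    have h3 : Real.sqrt 3 * Real.sqrt 3 = 3 := Real.mul_self_sqrt (by norm_num)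
    have hpi2 : Real.pi ^ 2 < 3 * L ^ 2 := by
      have hs3 : (0:ℝ) < Real.sqrt 3 := by positivity
      have : Real.pi < Real.sqrt 3 * L := by
        rw [div_lt_iff₀ hs3] at hLgt; nlinarith
      nlinarith [Real.pi_pos]
    have hLpos : 0 < L := lt_of_le_of_lt (by positivity) hLgt
    constructor
    · positivity
    · -- 4 * ((L²+π²)/(16L)) ≤ √(L²+π²)  ⇔  (L²+π²)² ≤ 16 L² (L²+π²)
      have heq : 4 * (1 / 16 * (L ^ 2 + Real.pi ^ 2) / L) = (L ^ 2 + Real.pi ^ 2) / (4 * L) := by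
        field_simp; ring
      rw [show Real.log (1 + ‖ξ‖ ^ 2) = L from rfl, heq, div_le_iff₀ (by positivity)]
      have ht4 : Real.sqrt (L ^ 2 + Real.pi ^ 2) ≤ 4 * L := by nlinarith
      nlinarith [mul_le_mul_of_nonneg_left ht4 hsn]

/-- Proposition: equivalence of the modified energy `E` and the natural energy `E₀`. -/
theorem stmt_3 (N : ℕ) (hN : 1 ≤ N) (ξ : EuclideanSpace ℝ (Fin N)) (u v : ℂ)
    (E₀ E : ℝ)
    (hE₀ : E₀ = (1 / 2) * ‖v‖ ^ 2 + (1 / 8) * Real.log (1 + ‖ξ‖ ^ 2) ^ 2 * ‖u‖ ^ 2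
      + (Real.pi ^ 2 / 8) * ‖u‖ ^ 2)
    (hE : E = E₀ + rho ξ * (v * (starRingEnd ℂ) u).re
      + rho ξ * Real.log (1 + ‖ξ‖ ^ 2) * ‖u‖ ^ 2 / 2) :
    (1 / 2) * E₀ ≤ E ∧ E ≤ (9 / 4) * E₀ := by
  obtain ⟨hr0, hr4⟩ := rho_bounds ξ
  set L := Real.log (1 + ‖ξ‖ ^ 2) with hLdef
  set r := rho ξ
  set s := Real.sqrt (L ^ 2 + Real.pi ^ 2) with hsdef
  have hs0 : 0 ≤ L ^ 2 + Real.pi ^ 2 := by positivity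
  have hssq : s ^ 2 = L ^ 2 + Real.pi ^ 2 := Real.sq_sqrt hs0
  have hsn : 0 ≤ s := Real.sqrt_nonneg _
  have hL0 : 0 ≤ L := Real.log_nonneg (by nlinarith [sq_nonneg ‖ξ‖])
  have hLs : L ≤ s := by nlinarith [sq_nonneg Real.pi]
  have hRe : |(v * (starRingEnd ℂ) u).re| ≤ ‖v‖ * ‖u‖ := by
    calc |(v * (starRingEnd ℂ) u).re| ≤ ‖v * (starRingEnd ℂ) u‖ := Complex.abs_re_le_norm _
    _ = ‖v‖ * ‖u‖ := by rw [norm_mul, RingHomIsometric.norm_map]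
  rw [abs_le] at hRe
  obtain ⟨hRe1, hRe2⟩ := hRe
  have ha := sq_nonneg ‖u‖
  have hb := sq_nonneg ‖v‖
  have han := norm_nonneg u
  have hbn := norm_nonneg v
  constructor
  · rw [hE, hE₀]
    nlinarith [sq_nonneg (‖v‖ / 2 - s / 4 * ‖u‖), mul_nonneg (mul_nonneg hr0 hL0) ha,
      mul_le_mul_of_nonneg_right hr4 (mul_nonneg hbn han)]
  · rw [hE, hE₀]
    nlinarith [sq_nonneg (2 * ‖v‖ - s * ‖u‖ / 2),
      mul_le_mul_of_nonneg_left hRe2 hr0,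
      mul_le_mul_of_nonneg_right hr4 (mul_nonneg hbn han),
      mul_le_mul_of_nonneg_right (mul_le_mul hr4 hLs hL0 hsn) ha]
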